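/- Let a, b be real numbers with a > -1, b > -1 and a + b < -1. Then ∫_ℝ |x|^a |1-x|^b dx = Γ(a+1)Γ(b+1)/Γ(a+b+2) + Γ(a+1)Γ(-a-b-1)/Γ(-b) + Γ(b+1)Γ(-a-b-1)/Γ(-a), where Γ denotes the Euler gamma function. -/

import Mathlib

open MeasureTheory Set

lemma rv_betaIntegral_ofReal {p q : ℝ} :
    Complex.betaIntegral p q
      = ((∫ x in (0:ℝ)..1, x ^ (p-1) * (1-x) ^ (q-1) : ℝ) : ℂ) := by
  rw [Complex.betaIntegral, ← intervalIntegral.integral_ofReal]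
  refine intervalIntegral.integral_congr fun x hx => ?_
  rw [uIcc_of_le zero_le_one] at hx
  rw [Complex.ofReal_mul, Complex.ofReal_cpow hx.1, Complex.ofReal_cpow (by linarith [hx.2])]
  push_cast
  ring

lemma rv_betaIntegral_Ioo {p q : ℝ} (hp : 0 < p) (hq : 0 < q) :
    ∫ x in Ioo (0:ℝ) 1, x ^ (p-1) * (1-x) ^ (q-1)
      = Real.Gamma p * Real.Gamma q / Real.Gamma (p+q) := by
  have h := Complex.Gamma_mul_Gamma_eq_betaIntegral (s := p) (t := q) (by simpa) (by simpa)
  rw [rv_betaIntegral_ofReal, ← Complex.ofReal_add, Complex.Gamma_ofReal,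
    Complex.Gamma_ofReal, Complex.Gamma_ofReal, ← Complex.ofReal_mul, ← Complex.ofReal_mul] at h
  have h' : Real.Gamma p * Real.Gamma q
      = Real.Gamma (p+q) * ∫ x in (0:ℝ)..1, x ^ (p-1) * (1-x) ^ (q-1) := by
    exact_mod_cast h
  have hΓ : Real.Gamma (p+q) ≠ 0 := (Real.Gamma_pos_of_pos (by linarith)).ne'
  have h2 : ∫ x in Ioo (0:ℝ) 1, x ^ (p-1) * (1-x) ^ (q-1)
      = ∫ x in (0:ℝ)..1, x ^ (p-1) * (1-x) ^ (q-1) := by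
    rw [intervalIntegral.integral_of_le zero_le_one, integral_Ioc_eq_integral_Ioo]
  rw [h2, eq_div_iff hΓ, mul_comm]
  exact h'.symm

lemma rv_betaIntegrable_Ioo {p q : ℝ} (hp : 0 < p) (hq : 0 < q) :
    IntegrableOn (fun x : ℝ => x ^ (p-1) * (1-x) ^ (q-1)) (Ioo 0 1) := by
  have h := (Complex.betaIntegral_convergent (u := p) (v := q) (by simpa) (by simpa)).norm
  rw [intervalIntegrable_iff_integrableOn_Ioc_of_le zero_le_one] at h
  refine ((h.mono_set Ioo_subset_Ioc_self).congr_fun (fun x hx => ?_) measurableSet_Ioo)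
  have h1 : (0:ℝ) < x := hx.1
  have h2 : (0:ℝ) < 1 - x := by linarith [hx.2]
  simp only [norm_mul]
  rw [show ((1:ℂ) - x) = ((1-x:ℝ):ℂ) by push_cast; ring,
    show ((q:ℂ) - 1) = ((q-1:ℝ):ℂ) by push_cast; ring,
    show ((p:ℂ) - 1) = ((p-1:ℝ):ℂ) by push_cast; ring,
    Complex.norm_cpow_eq_rpow_re_of_pos h1, Complex.norm_cpow_eq_rpow_re_of_pos h2,
    Complex.ofReal_re, Complex.ofReal_re]

lemma rv_phi_image : (fun t : ℝ => t / (1-t)) '' Ioo 0 1 = Ioi 0 := by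
  ext x
  constructor
  · rintro ⟨t, ⟨h0, h1⟩, rfl⟩
    exact div_pos h0 (by linarith)
  · intro hx
    have hx' : (0:ℝ) < x := hx
    refine ⟨x / (1+x), ⟨div_pos hx' (by linarith), ?_⟩, ?_⟩
    · rw [div_lt_one (by linarith)]; linarith
    · field_simp; ring

lemma rv_phi_deriv {t : ℝ} (ht : t ∈ Ioo (0:ℝ) 1) :
    HasDerivWithinAt (fun t : ℝ => t / (1-t)) (((1-t)^2)⁻¹) (Ioo 0 1) t := by
  have h2 : (1:ℝ) - t ≠ 0 := by simp only [mem_Ioo] at ht; intro h'; linarith [ht.2]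
  have := (hasDerivAt_id t).div ((hasDerivAt_id t).const_sub 1) h2
  refine this.hasDerivWithinAt.congr_deriv ?_
  simp only [id]
  field_simp
  ring

lemma rv_phi_inj : InjOn (fun t : ℝ => t / (1-t)) (Ioo 0 1) := by
  rintro s ⟨hs0, hs1⟩ t ⟨ht0, ht1⟩ h
  simp only at h
  have h1 : (1:ℝ) - s ≠ 0 := by linarith
  have h2 : (1:ℝ) - t ≠ 0 := by linarith
  field_simp at h
  linarith

lemma rv_phi_transform {p q t : ℝ} (ht : t ∈ Ioo (0:ℝ) 1) :
    |((1-t)^2)⁻¹| • ((t/(1-t)) ^ (p-1) * (1 + t/(1-t)) ^ (-(p+q)))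
      = t ^ (p-1) * (1-t) ^ (q-1) := by
  obtain ⟨h0, h1⟩ := ht
  have h2 : (0:ℝ) < 1 - t := by linarith
  have e1 : 1 + t/(1-t) = (1-t)⁻¹ := by field_simp; ring
  have A : (((1-t):ℝ)^2)⁻¹ = (1-t)^(-2:ℝ) := by
    rw [← Real.rpow_natCast (1-t) 2, ← Real.rpow_neg h2.le]; norm_num
  have B : (t/(1-t))^(p-1) = t^(p-1) * (1-t)^(-(p-1)) := by
    rw [Real.div_rpow h0.le h2.le, div_eq_mul_inv, ← Real.rpow_neg h2.le]
  have C : ((1-t)⁻¹:ℝ)^(-(p+q)) = (1-t)^(p+q) := by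
    rw [Real.inv_rpow h2.le, ← Real.rpow_neg h2.le, neg_neg]
  rw [e1, smul_eq_mul, abs_of_pos (by positivity), A, B, C]
  have D : ((1-t):ℝ)^(-2:ℝ) * ((1-t)^(-(p-1)) * (1-t)^(p+q)) = (1-t)^(q-1) := by
    rw [← Real.rpow_add h2, ← Real.rpow_add h2,
      show (-2:ℝ) + (-(p-1) + (p+q)) = q - 1 by ring]
  rw [← D]; ring

lemma rv_betaIntegrable_Ioi {p q : ℝ} (hp : 0 < p) (hq : 0 < q) :
    IntegrableOn (fun x : ℝ => x ^ (p-1) * (1+x) ^ (-(p+q))) (Ioi 0) := by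
  rw [← rv_phi_image, integrableOn_image_iff_integrableOn_abs_deriv_smul measurableSet_Ioo
    (fun t ht => rv_phi_deriv ht) rv_phi_inj]
  exact (rv_betaIntegrable_Ioo hp hq).congr_fun
    (fun t ht => (rv_phi_transform ht).symm) measurableSet_Ioo

lemma rv_betaIntegral_Ioi {p q : ℝ} (hp : 0 < p) (hq : 0 < q) :
    ∫ x in Ioi (0:ℝ), x ^ (p-1) * (1+x) ^ (-(p+q))
      = Real.Gamma p * Real.Gamma q / Real.Gamma (p+q) := by
  rw [← rv_phi_image, integral_image_eq_integral_abs_deriv_smul measurableSet_Ioo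
    (fun t ht => rv_phi_deriv ht) rv_phi_inj, ← rv_betaIntegral_Ioo hp hq]
  exact setIntegral_congr_fun measurableSet_Ioo fun t ht => rv_phi_transform ht

/-- The crossing-symmetric Veneziano amplitude: the value of the real 4-point
Koba-Nielsen integral in terms of Gamma functions. -/
theorem real_veneziano_four_point (a b : ℝ)
    (ha : -1 < a) (hb : -1 < b) (hab : a + b < -1) :
    ∫ x : ℝ, |x| ^ a * |1 - x| ^ b
      = Real.Gamma (a + 1) * Real.Gamma (b + 1) / Real.Gamma (a + b + 2)
        + Real.Gamma (a + 1) * Real.Gamma (-a - b - 1) / Real.Gamma (-b)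
        + Real.Gamma (b + 1) * Real.Gamma (-a - b - 1) / Real.Gamma (-a) := by
  set f : ℝ → ℝ := fun x => |x| ^ a * |1 - x| ^ b with hf
  have hp1 : (0:ℝ) < a + 1 := by linarith
  have hq1 : (0:ℝ) < b + 1 := by linarith
  have hr : (0:ℝ) < -a - b - 1 := by linarith
  -- the integrand on (0,1) agrees with the beta integrand
  have hIoo_eq : ∀ x ∈ Ioo (0:ℝ) 1,
      x ^ ((a+1)-1) * (1-x) ^ ((b+1)-1) = f x := by
    intro x hx
    rw [hf]
    simp only
    rw [abs_of_pos hx.1, abs_of_pos (by linarith [hx.2] : (0:ℝ) < 1 - x)]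
    norm_num
  -- IntegrableOn pieces
  have hI_Ioo : IntegrableOn f (Ioo 0 1) :=
    (rv_betaIntegrable_Ioo hp1 hq1).congr_fun hIoo_eq measurableSet_Ioo
  have hI_Ioc : IntegrableOn f (Ioc 0 1) := hI_Ioo.congr_set_ae Ioo_ae_eq_Ioc.symm
  -- neg substitution for (-∞, 0)
  have hneg_img : (fun u : ℝ => -u) '' Ioi 0 = Iio 0 := by
    simpa using Set.image_neg_Ioi (a := (0:ℝ))
  have hneg_deriv : ∀ u ∈ Ioi (0:ℝ),
      HasDerivWithinAt (fun u : ℝ => -u) ((fun _ : ℝ => (-1:ℝ)) u) (Ioi 0) u :=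
    fun u _ => (hasDerivAt_neg u).hasDerivWithinAt
  have hneg_transform : ∀ u ∈ Ioi (0:ℝ),
      |(-1:ℝ)| • f (-u) = u ^ ((a+1)-1) * (1+u) ^ (-((a+1) + (-a-b-1))) := by
    intro u hu
    have hu' : (0:ℝ) < u := hu
    rw [hf]
    simp only
    rw [abs_neg u, abs_of_pos hu', show (1:ℝ) - -u = 1 + u by ring,
      abs_of_pos (by linarith : (0:ℝ) < 1 + u)]
    rw [show -((a+1) + (-a-b-1)) = b by ring]
    norm_num
  have hI_Iio : IntegrableOn f (Iio 0) := by
    rw [← hneg_img, integrableOn_image_iff_integrableOn_abs_deriv_smul measurableSet_Ioi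
      hneg_deriv (neg_injective.injOn)]
    exact (rv_betaIntegrable_Ioi hp1 hr).congr_fun
      (fun u hu => (hneg_transform u hu).symm) measurableSet_Ioi
  have hI_Iic : IntegrableOn f (Iic 0) := hI_Iio.congr_set_ae Iio_ae_eq_Iic.symm
  have hint_Iio : ∫ x in Iio (0:ℝ), f x
      = Real.Gamma (a+1) * Real.Gamma (-a-b-1) / Real.Gamma (-b) := by
    rw [← hneg_img, integral_image_eq_integral_abs_deriv_smul measurableSet_Ioi
      hneg_deriv (neg_injective.injOn) f]
    rw [setIntegral_congr_fun measurableSet_Ioi hneg_transform,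
      rv_betaIntegral_Ioi hp1 hr, show (a+1) + (-a-b-1) = -b by ring]
  -- shift substitution for (1, ∞)
  have hshift_img : (fun u : ℝ => u + 1) '' Ioi 0 = Ioi 1 := by
    simpa using Set.image_add_const_Ioi (a := (1:ℝ)) (b := (0:ℝ))
  have hshift_deriv : ∀ u ∈ Ioi (0:ℝ),
      HasDerivWithinAt (fun u : ℝ => u + 1) ((fun _ : ℝ => (1:ℝ)) u) (Ioi 0) u :=
    fun u _ => ((hasDerivAt_id u).add_const 1).hasDerivWithinAt
  have hshift_transform : ∀ u ∈ Ioi (0:ℝ),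
      |(1:ℝ)| • f (u + 1) = u ^ ((b+1)-1) * (1+u) ^ (-((b+1) + (-a-b-1))) := by
    intro u hu
    have hu' : (0:ℝ) < u := hu
    rw [hf]
    simp only
    rw [show (1:ℝ) - (u + 1) = -u by ring, abs_neg, abs_of_pos hu',
      abs_of_pos (by linarith : (0:ℝ) < u + 1),
      show -((b+1) + (-a-b-1)) = a by ring, show u + 1 = 1 + u by ring]
    norm_num
    ring
  have hI_Ioi1 : IntegrableOn f (Ioi 1) := by
    rw [← hshift_img, integrableOn_image_iff_integrableOn_abs_deriv_smul measurableSet_Ioi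
      hshift_deriv ((add_left_injective (1:ℝ)).injOn)]
    exact (rv_betaIntegrable_Ioi hq1 hr).congr_fun
      (fun u hu => (hshift_transform u hu).symm) measurableSet_Ioi
  have hint_Ioi1 : ∫ x in Ioi (1:ℝ), f x
      = Real.Gamma (b+1) * Real.Gamma (-a-b-1) / Real.Gamma (-a) := by
    rw [← hshift_img, integral_image_eq_integral_abs_deriv_smul measurableSet_Ioi
      hshift_deriv ((add_left_injective (1:ℝ)).injOn) f]
    rw [setIntegral_congr_fun measurableSet_Ioi hshift_transform,
      rv_betaIntegral_Ioi hq1 hr, show (b+1) + (-a-b-1) = -a by ring]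
  have hint_Ioo : ∫ x in Ioo (0:ℝ) 1, f x
      = Real.Gamma (a+1) * Real.Gamma (b+1) / Real.Gamma (a+b+2) := by
    rw [← setIntegral_congr_fun measurableSet_Ioo hIoo_eq,
      rv_betaIntegral_Ioo hp1 hq1, show (a+1) + (b+1) = a+b+2 by ring]
  -- split the full integral
  have hI_Ioi0 : IntegrableOn f (Ioi 0) := by
    rw [← Ioc_union_Ioi_eq_Ioi (zero_le_one (α := ℝ))]
    exact hI_Ioc.union hI_Ioi1
  have hsplit2 : ∫ x in Ioi (0:ℝ), f x
      = (∫ x in Ioc (0:ℝ) 1, f x) + ∫ x in Ioi (1:ℝ), f x := by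
    rw [← Ioc_union_Ioi_eq_Ioi (zero_le_one (α := ℝ))]
    exact setIntegral_union (Ioc_disjoint_Ioi le_rfl) measurableSet_Ioi hI_Ioc hI_Ioi1
  rw [← intervalIntegral.integral_Iic_add_Ioi hI_Iic hI_Ioi0, hsplit2,
    setIntegral_congr_set Iio_ae_eq_Iic.symm, integral_Ioc_eq_integral_Ioo,
    hint_Iio, hint_Ioo, hint_Ioi1]
  ring
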